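/- For real u > 0 and real v, the Poisson-type summation identity holds: ∑_{n=−∞}^{∞} e^{−π² n²/(2u)} cos(π n v / u) = √(2u/π) · e^{−v²/(2u)} · ∑_{n=−∞}^{∞} e^{−2 n² u} cosh(2 n v). -/

import Mathlib

open Real Complex

lemma summable_exp_quad {c : ℝ} (hc : 0 < c) (d : ℝ) :
    Summable (fun n : ℤ => Real.exp (-c * (n : ℝ) ^ 2 + d * n)) := by
  have hτ : (0:ℝ) < Complex.im ((c / Real.pi : ℝ) * Complex.I) := by
    simp [div_pos hc Real.pi_pos]
  have h := (summable_jacobiTheta₂_term_iff (-(d / (2 * Real.pi) : ℝ) * Complex.I)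
      ((c / Real.pi : ℝ) * Complex.I)).mpr hτ
  have h2 := h.map Complex.reCLM Complex.reCLM.continuous
  refine h2.congr fun n => ?_
  simp only [Function.comp, jacobiTheta₂_term, Complex.reCLM_apply]
  have : 2 * ↑π * I * (n:ℂ) * (-(↑(d / (2 * Real.pi)) : ℂ) * I) +
      ↑π * I * (n:ℂ) ^ 2 * ((↑(c / Real.pi) : ℂ) * I) = ((-c * (n:ℝ)^2 + d * n : ℝ) : ℂ) := by
    have hπ : (Real.pi : ℂ) ≠ 0 := by exact_mod_cast Real.pi_ne_zero
    push_cast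
    field_simp
    ring_nf
    rw [Complex.I_sq]
    ring
  rw [this, ← Complex.ofReal_exp, Complex.ofReal_re]

theorem poisson_summation_identity (u v : ℝ) (hu : 0 < u) :
    (∑' n : ℤ, Real.exp (-(Real.pi ^ 2 * (n : ℝ) ^ 2) / (2 * u)) *
        Real.cos (Real.pi * (n : ℝ) * v / u)) =
      Real.sqrt (2 * u / Real.pi) * Real.exp (-v ^ 2 / (2 * u)) *
        ∑' n : ℤ, Real.exp (-2 * (n : ℝ) ^ 2 * u) * Real.cosh (2 * (n : ℝ) * v) := by
  have h2u : (0:ℝ) < 2 * u := by linarith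
  have hπ := Real.pi_pos
  have hA : (0:ℝ) < π / (2 * u) := div_pos hπ h2u
  have hune : u ≠ 0 := hu.ne'
  have hπne : (π : ℝ) ≠ 0 := hπ.ne'
  -- real functions
  set f : ℤ → ℝ := fun n => Real.exp (-(π ^ 2 * (n : ℝ) ^ 2) / (2 * u)) *
      Real.cos (π * (n : ℝ) * v / u) with hf_def
  set g : ℤ → ℝ := fun n => Real.exp (-(π ^ 2 * (n : ℝ) ^ 2) / (2 * u)) *
      Real.sin (π * (n : ℝ) * v / u) with hg_def
  set q : ℤ → ℝ := fun n => Real.exp (-2 * (n : ℝ) ^ 2 * u + 2 * (n : ℝ) * v) with hq_def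
  have hc : (0:ℝ) < π ^ 2 / (2 * u) := div_pos (by positivity) h2u
  have hfs : Summable f := by
    apply (summable_exp_quad hc 0).of_norm_bounded
    intro n
    rw [hf_def]
    simp only [norm_mul, Real.norm_eq_abs, Real.abs_exp, zero_mul, add_zero]
    calc Real.exp (-(π ^ 2 * (n:ℝ) ^ 2) / (2 * u)) * |Real.cos (π * (n:ℝ) * v / u)|
        ≤ Real.exp (-(π ^ 2 * (n:ℝ) ^ 2) / (2 * u)) * 1 :=
          mul_le_mul_of_nonneg_left (abs_cos_le_one _) (Real.exp_pos _).le
      _ = Real.exp (-(π ^ 2 / (2*u)) * (n:ℝ) ^ 2) := by rw [mul_one]; ring_nf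
  have hgs : Summable g := by
    apply (summable_exp_quad hc 0).of_norm_bounded
    intro n
    rw [hg_def]
    simp only [norm_mul, Real.norm_eq_abs, Real.abs_exp, zero_mul, add_zero]
    calc Real.exp (-(π ^ 2 * (n:ℝ) ^ 2) / (2 * u)) * |Real.sin (π * (n:ℝ) * v / u)|
        ≤ Real.exp (-(π ^ 2 * (n:ℝ) ^ 2) / (2 * u)) * 1 :=
          mul_le_mul_of_nonneg_left (abs_sin_le_one _) (Real.exp_pos _).le
      _ = Real.exp (-(π ^ 2 / (2*u)) * (n:ℝ) ^ 2) := by rw [mul_one]; ring_nf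
  have hqs : Summable q := by
    refine (summable_exp_quad h2u (2*v)).congr fun n => ?_
    rw [hq_def]; ring_nf
  -- the key Poisson summation input
  have key := Complex.tsum_exp_neg_quadratic
    (a := ((π / (2*u) : ℝ) : ℂ)) (by rw [Complex.ofReal_re]; exact hA) ((v / (2*u) : ℝ) * I)
  -- rewrite LHS terms of key
  have hL : ∀ n : ℤ, Complex.exp (-↑π * ((π / (2*u) : ℝ) : ℂ) * (n:ℂ) ^ 2 +
      2 * ↑π * (((v / (2*u) : ℝ)) * I) * (n:ℂ)) = ((f n : ℝ) : ℂ) + ((g n : ℝ) : ℂ) * I := by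
    intro n
    have he : (-↑π * ((π / (2*u) : ℝ) : ℂ) * (n:ℂ) ^ 2 +
        2 * ↑π * (((v / (2*u) : ℝ)) * I) * (n:ℂ)) =
        ((-(π ^ 2 * (n:ℝ) ^ 2) / (2 * u) : ℝ) : ℂ) + ((π * (n:ℝ) * v / u : ℝ) : ℂ) * I := by
      push_cast
      have h2une : (2*u : ℂ) ≠ 0 := by exact_mod_cast h2u.ne'
      have hune' : (u : ℂ) ≠ 0 := by exact_mod_cast hune
      field_simp
    rw [he, Complex.exp_add, Complex.exp_mul_I, ← Complex.ofReal_exp, ← Complex.ofReal_cos,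
      ← Complex.ofReal_sin, hf_def, hg_def]
    push_cast
    ring
  -- rewrite RHS terms of key
  have hR : ∀ n : ℤ, Complex.exp (-↑π / ((π / (2*u) : ℝ) : ℂ) *
      ((n:ℂ) + I * (((v / (2*u) : ℝ)) * I)) ^ 2) =
      ((Real.exp (-v ^ 2 / (2 * u)) * q n : ℝ) : ℂ) := by
    intro n
    have he : (-↑π / ((π / (2*u) : ℝ) : ℂ) * ((n:ℂ) + I * (((v / (2*u) : ℝ)) * I)) ^ 2) =
        ((-v ^ 2 / (2 * u) + (-2 * (n:ℝ) ^ 2 * u + 2 * (n:ℝ) * v) : ℝ) : ℂ) := by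
      have hπc : (π : ℂ) ≠ 0 := by exact_mod_cast hπne
      have h2une : (2*u : ℂ) ≠ 0 := by exact_mod_cast h2u.ne'
      have hune' : (u : ℂ) ≠ 0 := by exact_mod_cast hune
      push_cast
      rw [div_div_eq_mul_div, mul_comm I _, mul_assoc, Complex.I_mul_I]
      field_simp
      ring
    rw [he, ← Complex.ofReal_exp, Real.exp_add, hq_def]
  -- compute the sqrt factor
  have hsqrt : 1 / ((π / (2*u) : ℝ) : ℂ) ^ (1/2 : ℂ) = ((Real.sqrt (2 * u / π) : ℝ) : ℂ) := by
    rw [show ((1:ℂ)/2) = ((1/2 : ℝ) : ℂ) by norm_num, ← Complex.ofReal_cpow hA.le,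
      ← Complex.ofReal_one, ← Complex.ofReal_div]
    congr 1
    rw [← Real.sqrt_eq_rpow, one_div, ← Real.sqrt_inv]
    congr 1
    field_simp
  -- turn key into a statement about real sums
  rw [tsum_congr hL, tsum_congr hR, hsqrt] at key
  -- left side of key
  have hGzero : ∑' n : ℤ, ((g n : ℝ) : ℂ) * I = 0 := by
    have hodd : ∀ n : ℤ, g (-n) = - g n := by
      intro n
      rw [hg_def]
      push_cast
      rw [neg_sq, show π * (-(n:ℝ)) * v / u = -(π * (n:ℝ) * v / u) by ring, Real.sin_neg]
      ring
    have h1 : ∑' n : ℤ, ((g n : ℝ) : ℂ) * I = ∑' n : ℤ, ((g (-n) : ℝ) : ℂ) * I :=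
      ((Equiv.neg ℤ).tsum_eq (fun n => ((g n : ℝ) : ℂ) * I)).symm
    simp only [hodd, Complex.ofReal_neg, neg_mul] at h1
    rw [tsum_neg] at h1
    linear_combination h1 / 2
  have hsplit : ∑' n : ℤ, (((f n : ℝ) : ℂ) + ((g n : ℝ) : ℂ) * I) = ((∑' n : ℤ, f n : ℝ) : ℂ) := by
    rw [Summable.tsum_add (Complex.summable_ofReal.mpr hfs)
      ((Complex.summable_ofReal.mpr hgs).mul_right I), hGzero, add_zero, Complex.ofReal_tsum]
  have hqsum : ∑' n : ℤ, q n = ∑' n : ℤ, Real.exp (-2 * (n : ℝ) ^ 2 * u) *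
      Real.cosh (2 * (n : ℝ) * v) := by
    have hqneg : Summable (fun n : ℤ => q (-n)) := hqs.comp_injective neg_injective
    have hterm : ∀ n : ℤ, Real.exp (-2 * (n : ℝ) ^ 2 * u) * Real.cosh (2 * (n : ℝ) * v) =
        (q n + q (-n)) / 2 := by
      intro n
      rw [Real.cosh_eq, hq_def]
      push_cast
      rw [neg_sq, Real.exp_add, Real.exp_add]
      ring_nf
    rw [tsum_congr hterm]
    have : ∑' n : ℤ, (q n + q (-n)) / 2 = ((∑' n : ℤ, q n) + ∑' n : ℤ, q (-n)) / 2 := by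
      rw [← Summable.tsum_add hqs hqneg, tsum_div_const]
    rw [this]
    have hneg : ∑' n : ℤ, q (-n) = ∑' n : ℤ, q n := (Equiv.neg ℤ).tsum_eq q
    rw [hneg]
    ring
  rw [hsplit] at key
  have hrhs : ∑' n : ℤ, ((Real.exp (-v ^ 2 / (2 * u)) * q n : ℝ) : ℂ) =
      ((Real.exp (-v ^ 2 / (2 * u)) * ∑' n : ℤ, q n : ℝ) : ℂ) := by
    rw [Complex.ofReal_mul, Complex.ofReal_tsum, ← tsum_mul_left]
    push_cast
    rfl
  rw [hrhs] at key
  have : (∑' n : ℤ, f n) = Real.sqrt (2 * u / π) * (Real.exp (-v ^ 2 / (2 * u)) *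
      ∑' n : ℤ, q n) := by exact_mod_cast key
  rw [this, hqsum]
  ring
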